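/- Let (G,P) be a quasi-lattice ordered group and F ⊆ P a finite subset. Then for large m ∈ P (in the sense that for every p ∈ P there exists q ≥ p such that the following holds whenever m ≥ q), the set F is the disjoint union of {r ∈ F : r ≤ m} and {r ∈ F : r and m have no common upper bound in P}. -/

import Mathlib

/-- A quasi-lattice ordered group. -/
def QLO {K : Type*} [Group K] (R : Submonoid K) : Prop :=
  (∀ k : K, k ∈ R → k⁻¹ ∈ R → k = 1) ∧
  ∀ g h : K, (∃ u, u ∈ R ∧ g⁻¹ * u ∈ R ∧ h⁻¹ * u ∈ R) →
    ∃ u, (u ∈ R ∧ g⁻¹ * u ∈ R ∧ h⁻¹ * u ∈ R) ∧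
      ∀ w, w ∈ R → g⁻¹ * w ∈ R → h⁻¹ * w ∈ R → u⁻¹ * w ∈ R

/-- `u` is a common upper bound of `g` and `h` lying in `R`. -/
def IsCUB {K : Type*} [Group K] (R : Submonoid K) (g h u : K) : Prop :=
  u ∈ R ∧ g⁻¹ * u ∈ R ∧ h⁻¹ * u ∈ R

/-- `Ppred` holds for large `s ∈ P`. -/
def ForLarge {G : Type*} [Group G] (P : Submonoid G) (Ppred : G → Prop) : Prop :=
  ∀ p ∈ P, ∃ q ∈ P, p⁻¹ * q ∈ P ∧ ∀ s ∈ P, q⁻¹ * s ∈ P → Ppred s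

private lemma trans_mem {G : Type*} [Group G] (P : Submonoid G) {a b c : G}
    (h1 : a⁻¹ * b ∈ P) (h2 : b⁻¹ * c ∈ P) : a⁻¹ * c ∈ P := by
  have : a⁻¹ * c = (a⁻¹ * b) * (b⁻¹ * c) := by group
  rw [this]; exact mul_mem h1 h2

/-- for a finite `F ⊆ P`, for large `m ∈ P` every element of `F` either lies
below `m` or has no common upper bound with `m`, and not both (disjoint union). -/
theorem finset_splits_for_large {G : Type*} [Group G] (P : Submonoid G) (hQLO : QLO P)
    (F : Finset G) (hF : ∀ r ∈ F, r ∈ P) :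
    ForLarge P (fun m => ∀ r ∈ F,
      (r⁻¹ * m ∈ P ∨ ¬ ∃ u, IsCUB P r m u) ∧
      ¬ (r⁻¹ * m ∈ P ∧ ¬ ∃ u, IsCUB P r m u)) := by
  classical
  induction F using Finset.induction_on with
  | empty =>
    intro p hp
    exact ⟨p, hp, by simpa using one_mem P, fun s hs _ r hr => absurd hr (by simp)⟩
  | insert _ _ hr ih =>
    rename_i r F
    have hrP : r ∈ P := hF r (Finset.mem_insert_self r F)
    have ih' := ih (fun x hx => hF x (Finset.mem_insert_of_mem hx))
    intro p hp
    obtain ⟨q, hq, hpq, hq'⟩ := ih' p hp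
    -- auxiliary: if r ≤ s then s itself is a CUB of r and s
    have selfCUB : ∀ x s : G, s ∈ P → x⁻¹ * s ∈ P → ∃ u, IsCUB P x s u := by
      intro x s hs hxs
      exact ⟨s, hs, hxs, by simpa using one_mem P⟩
    by_cases h : ∃ u, u ∈ P ∧ r⁻¹ * u ∈ P ∧ q⁻¹ * u ∈ P
    · obtain ⟨u, ⟨huP, hru, hqu⟩, -⟩ := hQLO.2 r q h
      refine ⟨u, huP, trans_mem P hpq hqu, ?_⟩
      intro s hs hus x hx
      have hqs : q⁻¹ * s ∈ P := trans_mem P hqu hus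
      rcases Finset.mem_insert.mp hx with rfl | hxF
      · have hxs : x⁻¹ * s ∈ P := trans_mem P hru hus
        exact ⟨Or.inl hxs, fun ⟨_, hno⟩ => hno (selfCUB x s hs hxs)⟩
      · exact hq' s hs hqs x hxF
    · refine ⟨q, hq, hpq, ?_⟩
      intro s hs hqs x hx
      rcases Finset.mem_insert.mp hx with rfl | hxF
      · have hno : ¬ ∃ u, IsCUB P x s u := by
          rintro ⟨u, huP, hxu, hsu⟩
          exact h ⟨u, huP, hxu, trans_mem P hqs hsu⟩
        exact ⟨Or.inr hno, fun ⟨hxs, _⟩ => hno (selfCUB x s hs hxs)⟩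
      · exact hq' s hs hqs x hxF
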